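/- Assume τ > 0 and τ ≥ min{γ̄, β̄·ℓ†}. Then every Wardrop equilibrium has σ*_toll = 0, i.e. no agent takes the HOT lane by paying the toll. -/
import Mathlib


open MeasureTheory Set

namespace HOT

inductive Action : Type
  | toll
  | pool
  | o
  deriving DecidableEq

instance : MeasurableSpace Action := ⊤

/-- The rectangle of preference parameters `[0,β̄] × [0,γ̄]`. -/
def Rbox (βb γb : ℝ) : Set (ℝ × ℝ) := Icc (0:ℝ) βb ×ˢ Icc (0:ℝ) γb

/-- The strategy distribution of a strategy profile `s`: the `f`-mass of agents
in the rectangle choosing each action. -/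
noncomputable def stratDist (βb γb : ℝ) (f : ℝ × ℝ → ℝ) (s : ℝ × ℝ → Action)
    (a : Action) : ℝ :=
  ∫ p in Rbox βb γb ∩ s ⁻¹' {a}, f p

/-- HOT-lane vehicle flow induced by a strategy distribution. -/
noncomputable def xh (A : ℕ) (D : ℝ) (σ : Action → ℝ) : ℝ :=
  (σ Action.toll + σ Action.pool / (A : ℝ)) * D

/-- Ordinary-lane vehicle flow induced by a strategy distribution. -/
noncomputable def xo (D : ℝ) (σ : Action → ℝ) : ℝ := σ Action.o * D

/-- Latency difference `ℓ_δ(σ) = ℓ_o(x_o(σ)) − ℓ_h(x_h(σ))`. -/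
noncomputable def ldiff (ℓo ℓh : ℝ → ℝ) (A : ℕ) (D : ℝ) (σ : Action → ℝ) : ℝ :=
  ℓo (xo D σ) - ℓh (xh A D σ)

/-- The cost of agent `(β,γ)` for each action, given a strategy distribution. -/
noncomputable def cost (ℓo ℓh : ℝ → ℝ) (A : ℕ) (D τ : ℝ) (σ : Action → ℝ)
    (β γ : ℝ) : Action → ℝ
  | Action.toll => β * ℓh (xh A D σ) + τ
  | Action.pool => β * ℓh (xh A D σ) + γ
  | Action.o => β * ℓo (xo D σ)

/-- Wardrop equilibrium: every agent's action minimizes its own cost. -/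
def IsWardrop (ℓo ℓh : ℝ → ℝ) (A : ℕ) (D τ βb γb : ℝ) (f : ℝ × ℝ → ℝ)
    (s : ℝ × ℝ → Action) : Prop :=
  Measurable s ∧
  ∀ p ∈ Rbox βb γb, ∀ a : Action,
    cost ℓo ℓh A D τ (stratDist βb γb f s) p.1 p.2 (s p) ≤
      cost ℓo ℓh A D τ (stratDist βb γb f s) p.1 p.2 a

/-- Threshold carpool share `σ†_pool = ∫₀^β̄ ∫₀^{min(τ,γ̄)·β/β̄} f`. -/
noncomputable def sigmaDagger (βb γb τ : ℝ) (f : ℝ × ℝ → ℝ) : ℝ :=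
  ∫ β in (0:ℝ)..βb, ∫ γ in (0:ℝ)..(min τ γb * β / βb), f (β, γ)

/-- Threshold latency difference `ℓ† = ℓ_o((1−σ†)·D) − ℓ_h((σ†/A)·D)`. -/
noncomputable def ellDagger (ℓo ℓh : ℝ → ℝ) (A : ℕ) (D βb γb τ : ℝ)
    (f : ℝ × ℝ → ℝ) : ℝ :=
  ℓo ((1 - sigmaDagger βb γb τ f) * D) - ℓh (sigmaDagger βb γb τ f / (A : ℝ) * D)

/-- Regime-B toll share as a function of the latency difference `δ`. -/
noncomputable def gB (τ βb γb : ℝ) (f : ℝ × ℝ → ℝ) (δ : ℝ) : ℝ :=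
  ∫ γ in τ..γb, ∫ β in (τ / δ)..βb, f (β, γ)

/-- Regime-B carpool share as a function of the latency difference `δ`. -/
noncomputable def hB (τ βb : ℝ) (f : ℝ × ℝ → ℝ) (δ : ℝ) : ℝ :=
  ∫ γ in (0:ℝ)..τ, ∫ β in (γ / δ)..βb, f (β, γ)

end HOT

open HOT

set_option maxHeartbeats 1000000

/-- in regime A (high toll), no agent pays the toll in equilibrium. -/
theorem stmt3
    (ℓo ℓh : ℝ → ℝ) (A : ℕ) (D τ βb γb : ℝ) (f : ℝ × ℝ → ℝ)
    (hD : 0 < D) (hA : 2 ≤ A) (hβb : 0 < βb) (hγb : 0 < γb)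
    (hoc : ContinuousOn ℓo (Ici 0)) (hom : StrictMonoOn ℓo (Ici 0))
    (hhc : ContinuousOn ℓh (Ici 0)) (hhm : StrictMonoOn ℓh (Ici 0))
    (hfree : ℓo 0 = ℓh 0)
    (hfc : ContinuousOn f (Rbox βb γb)) (hfpos : ∀ p ∈ Rbox βb γb, 0 < f p)
    (hfint : (∫ p in Rbox βb γb, f p) = 1)
    (hτ : 0 < τ)
    (hreg : min γb (βb * ellDagger ℓo ℓh A D βb γb τ f) ≤ τ)
    (s : ℝ × ℝ → Action) (hs : IsWardrop ℓo ℓh A D τ βb γb f s) :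
    stratDist βb γb f s Action.toll = 0 := by
  classical
  -- abbreviations
  set σ : Action → ℝ := stratDist βb γb f s with hσ
  have hRmeas : MeasurableSet (Rbox βb γb) :=
    (measurableSet_Icc.prod measurableSet_Icc)
  have hpre : ∀ a : Action, MeasurableSet (s ⁻¹' ({a} : Set Action)) :=
    fun a => hs.1 (by exact MeasurableSpace.measurableSet_top)
  have hRcomp : IsCompact (Rbox βb γb) := isCompact_Icc.prod isCompact_Icc
  have hfintR : IntegrableOn f (Rbox βb γb) := hfc.integrableOn_compact hRcomp
  have hσnonneg : ∀ a : Action, 0 ≤ σ a := by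
    intro a
    exact setIntegral_nonneg (hRmeas.inter (hpre a)) (fun q hq => (hfpos q hq.1).le)
  -- sum of shares is 1
  have hdisj : ∀ a b : Action, a ≠ b →
      Disjoint (Rbox βb γb ∩ s ⁻¹' {a}) (Rbox βb γb ∩ s ⁻¹' {b}) := by
    intro a b hab
    refine Set.disjoint_left.2 fun q hqa hqb => hab ?_
    have h1 : s q = a := hqa.2
    have h2 : s q = b := hqb.2
    rw [← h1, h2]
  have hcover : Rbox βb γb = (Rbox βb γb ∩ s ⁻¹' {Action.toll}) ∪
      ((Rbox βb γb ∩ s ⁻¹' {Action.pool}) ∪ (Rbox βb γb ∩ s ⁻¹' {Action.o})) := by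
    ext q
    simp only [Set.mem_union, Set.mem_inter_iff, Set.mem_preimage, Set.mem_singleton_iff]
    constructor
    · intro hq
      cases h' : s q <;> tauto
    · tauto
  have hsum : σ Action.toll + σ Action.pool + σ Action.o = 1 := by
    have h1 := hfint
    rw [hcover] at h1
    rw [setIntegral_union (Set.disjoint_union_right.2
        ⟨hdisj _ _ (by simp), hdisj _ _ (by simp)⟩)
        ((hRmeas.inter (hpre _)).union (hRmeas.inter (hpre _)))
        (hfintR.mono_set Set.inter_subset_left)
        ((hfintR.mono_set Set.inter_subset_left).union
          (hfintR.mono_set Set.inter_subset_left)),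
      setIntegral_union (hdisj _ _ (by simp)) (hRmeas.inter (hpre _))
        (hfintR.mono_set Set.inter_subset_left)
        (hfintR.mono_set Set.inter_subset_left)] at h1
    simp only [hσ, stratDist]
    linarith
  by_contra hne
  have htpos : 0 < σ Action.toll := lt_of_le_of_ne (hσnonneg _) (Ne.symm hne)
  -- a toll agent exists
  obtain ⟨p, hp⟩ : (Rbox βb γb ∩ s ⁻¹' {Action.toll}).Nonempty := by
    rcases Set.eq_empty_or_nonempty (Rbox βb γb ∩ s ⁻¹' {Action.toll}) with he | hne'
    · exfalso; apply hne
      simp only [hσ, stratDist, he, Measure.restrict_empty, integral_zero_measure]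
    · exact hne'
  set lh : ℝ := ℓh (xh A D σ) with hlh
  set lo : ℝ := ℓo (xo D σ) with hlo
  have hsp : s p = Action.toll := hp.2
  have hWo := hs.2 p hp.1 Action.o
  have hWp := hs.2 p hp.1 Action.pool
  rw [hsp] at hWo hWp
  simp only [cost] at hWo hWp
  -- hWo : p.1 * lh + τ ≤ p.1 * lo ; hWp : p.1 * lh + τ ≤ p.1 * lh + p.2
  have hp1 : p.1 ∈ Icc (0:ℝ) βb := hp.1.1
  have hp2 : p.2 ∈ Icc (0:ℝ) γb := hp.1.2
  have hτp2 : τ ≤ p.2 := by linarith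
  have hτγb : τ ≤ γb := le_trans hτp2 hp2.2
  have hτpδ : τ ≤ p.1 * (lo - lh) := by linarith
  have hδpos : 0 < lo - lh := by nlinarith [hp1.1, hp1.2]
  have hτβδ : τ ≤ βb * (lo - lh) := by nlinarith [hp1.1, hp1.2]
  rcases min_le_iff.1 hreg with hcase | hcase
  · -- Case A: γb ≤ τ : toll agents all have γ = γb, a null set
    have hτeq : τ = γb := le_antisymm hτγb hcase
    have hsub : (Rbox βb γb ∩ s ⁻¹' {Action.toll}) ⊆ {q : ℝ × ℝ | q.2 = γb} := by
      intro q hq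
      have hsq : s q = Action.toll := hq.2
      have hW := hs.2 q hq.1 Action.pool
      rw [hsq] at hW
      simp only [cost] at hW
      have hq2 : q.2 ∈ Icc (0:ℝ) γb := hq.1.2
      have : τ ≤ q.2 := by linarith
      exact le_antisymm hq2.2 (hτeq ▸ this)
    have hnull : volume {q : ℝ × ℝ | q.2 = γb} = 0 := by
      have : {q : ℝ × ℝ | q.2 = γb} = (Set.univ : Set ℝ) ×ˢ ({γb} : Set ℝ) := by
        ext q
        simp only [Set.mem_setOf_eq, Set.mem_prod, Set.mem_univ, Set.mem_singleton_iff,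
          true_and]
      rw [this, Measure.volume_eq_prod, Measure.prod_prod]
      simp
    apply hne
    simp only [hσ, stratDist]
    rw [Measure.restrict_eq_zero.2 (measure_mono_null hsub hnull), integral_zero_measure]
  · -- Case B: βb * ℓ† ≤ τ
    set c : ℝ := min τ γb with hc
    have hcpos : 0 < c := lt_min hτ hγb
    have hcτ : c ≤ τ := min_le_left _ _
    have hcγb : c ≤ γb := min_le_right _ _
    set T : Set (ℝ × ℝ) := Rbox βb γb ∩ {q : ℝ × ℝ | q.2 < c * q.1 / βb} with hT
    have hTmeas : MeasurableSet T :=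
      hRmeas.inter (measurableSet_lt measurable_snd
        ((measurable_fst.const_mul c).div_const βb))
    -- T consists of carpoolers
    have hTsub : T ⊆ Rbox βb γb ∩ s ⁻¹' {Action.pool} := by
      rintro q ⟨hqR, hqlt⟩
      have hq1 : q.1 ∈ Icc (0:ℝ) βb := hqR.1
      have hq2 : q.2 ∈ Icc (0:ℝ) γb := hqR.2
      have hqlt' : q.2 < c * q.1 / βb := hqlt
      have hγτ : q.2 < τ := by
        have : c * q.1 / βb ≤ τ := by
          rw [div_le_iff₀ hβb]
          nlinarith [hq1.1, hq1.2]
        linarith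
      have hγδ : q.2 < q.1 * (lo - lh) := by
        have : c * q.1 / βb ≤ q.1 * (lo - lh) := by
          rw [div_le_iff₀ hβb]
          nlinarith [hq1.1, hq1.2]
        linarith
      refine ⟨hqR, ?_⟩
      have hW := hs.2 q hqR
      show s q = Action.pool
      cases hsq : s q with
      | toll =>
        have := hW Action.pool
        rw [hsq] at this
        simp only [cost] at this
        linarith
      | pool => rfl
      | o =>
        have := hW Action.pool
        rw [hsq] at this
        simp only [cost] at this
        linarith
    have hTint : IntegrableOn f T := hfintR.mono_set Set.inter_subset_left
    -- Fubini: the integral over T equals sigmaDagger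
    have hTeq : (∫ q in T, f q) = sigmaDagger βb γb τ f := by
      have hint : Integrable (T.indicator f) (volume : Measure (ℝ × ℝ)) :=
        (integrable_indicator_iff hTmeas).2 hTint
      have hinner : ∀ β : ℝ, (∫ γ : ℝ, T.indicator f (β, γ)) =
          (Icc (0:ℝ) βb).indicator
            (fun β' => ∫ γ in (0:ℝ)..(c * β' / βb), f (β', γ)) β := by
        intro β
        by_cases hβ : β ∈ Icc (0:ℝ) βb
        · rw [Set.indicator_of_mem hβ]
          have h1 : ∀ γ : ℝ, T.indicator f (β, γ) =
              (Ico (0:ℝ) (c * β / βb)).indicator (fun γ => f (β, γ)) γ := by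
            intro γ
            by_cases hγ : γ ∈ Ico (0:ℝ) (c * β / βb)
            · rw [Set.indicator_of_mem hγ]
              refine Set.indicator_of_mem ?_ f
              refine ⟨⟨hβ, ⟨hγ.1, ?_⟩⟩, hγ.2⟩
              have h2 : c * β / βb ≤ γb := by
                rw [div_le_iff₀ hβb]
                nlinarith [hβ.1, hβ.2]
              linarith [hγ.2]
            · rw [Set.indicator_of_notMem hγ]
              refine Set.indicator_of_notMem (fun hmem => hγ ?_) f
              exact ⟨hmem.1.2.1, hmem.2⟩
          simp only [h1]
          rw [integral_indicator measurableSet_Ico, integral_Ico_eq_integral_Ioo, ← integral_Ioc_eq_integral_Ioo,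
            ← intervalIntegral.integral_of_le (div_nonneg (mul_nonneg hcpos.le hβ.1) hβb.le)]
        · rw [Set.indicator_of_notMem hβ]
          have h1 : ∀ γ : ℝ, T.indicator f (β, γ) = 0 := fun γ =>
            Set.indicator_of_notMem (fun hmem => hβ hmem.1.1) f
          simp only [h1, integral_zero]
      calc (∫ q in T, f q) = ∫ q, T.indicator f q := (integral_indicator hTmeas).symm
        _ = ∫ β : ℝ, ∫ γ : ℝ, T.indicator f (β, γ) := by
            rw [Measure.volume_eq_prod]
            exact integral_prod _ (by rwa [← Measure.volume_eq_prod])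
        _ = ∫ β : ℝ, (Icc (0:ℝ) βb).indicator
              (fun β' => ∫ γ in (0:ℝ)..(c * β' / βb), f (β', γ)) β := by
            simp only [hinner]
        _ = ∫ β in Icc (0:ℝ) βb, ∫ γ in (0:ℝ)..(c * β / βb), f (β, γ) :=
            integral_indicator measurableSet_Icc
        _ = ∫ β in Ioc (0:ℝ) βb, ∫ γ in (0:ℝ)..(c * β / βb), f (β, γ) :=
            integral_Icc_eq_integral_Ioc
        _ = ∫ β in (0:ℝ)..βb, ∫ γ in (0:ℝ)..(c * β / βb), f (β, γ) :=
            (intervalIntegral.integral_of_le hβb.le).symm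
        _ = sigmaDagger βb γb τ f := rfl
    have hσd_nonneg : 0 ≤ sigmaDagger βb γb τ f := by
      rw [← hTeq]
      exact setIntegral_nonneg hTmeas (fun q hq => (hfpos q hq.1).le)
    have hpool_ge : sigmaDagger βb γb τ f ≤ σ Action.pool := by
      rw [← hTeq]
      refine setIntegral_mono_set (hfintR.mono_set Set.inter_subset_left) ?_ ?_
      · exact (ae_restrict_iff' (hRmeas.inter (hpre _))).2
          (Filter.Eventually.of_forall fun q hq => (hfpos q hq.1).le)
      · exact HasSubset.Subset.eventuallyLE hTsub
    -- flows comparison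
    have hApos : (0:ℝ) < (A : ℝ) := by
      have : (0:ℕ) < A := by omega
      exact_mod_cast this
    have hxo_nonneg : 0 ≤ xo D σ := by
      have h0 := hσnonneg Action.o
      unfold xo
      exact mul_nonneg h0 hD.le
    have hxh_nonneg : 0 ≤ xh A D σ := by
      have h1 := hσnonneg Action.toll
      have h2 := hσnonneg Action.pool
      unfold xh
      exact mul_nonneg (add_nonneg h1 (div_nonneg h2 hApos.le)) hD.le
    have hpool_le_one : σ Action.pool ≤ 1 := by
      have := hσnonneg Action.o
      linarith
    have hσd_le_one : sigmaDagger βb γb τ f ≤ 1 := le_trans hpool_ge hpool_le_one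
    have hlo_le : lo ≤ ℓo ((1 - sigmaDagger βb γb τ f) * D) := by
      have hle : xo D σ ≤ (1 - sigmaDagger βb γb τ f) * D := by
        unfold xo
        have h3 : σ Action.o ≤ 1 - sigmaDagger βb γb τ f := by linarith
        exact mul_le_mul_of_nonneg_right h3 hD.le
      exact hom.monotoneOn (Set.mem_Ici.2 hxo_nonneg)
        (Set.mem_Ici.2 (mul_nonneg (by linarith) hD.le)) hle
    have hlh_lt : ℓh (sigmaDagger βb γb τ f / (A:ℝ) * D) < lh := by
      have hlt : sigmaDagger βb γb τ f / (A:ℝ) * D < xh A D σ := by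
        unfold xh
        have h1 : sigmaDagger βb γb τ f / (A:ℝ) ≤ σ Action.pool / (A:ℝ) :=
          (div_le_div_iff_of_pos_right hApos).2 hpool_ge
        have h2 : sigmaDagger βb γb τ f / (A:ℝ) < σ Action.toll + σ Action.pool / (A:ℝ) := by
          linarith
        exact mul_lt_mul_of_pos_right h2 hD
      exact hhm (Set.mem_Ici.2 (mul_nonneg (div_nonneg hσd_nonneg hApos.le) hD.le))
        (Set.mem_Ici.2 hxh_nonneg) hlt
    have hld : lo - lh < ellDagger ℓo ℓh A D βb γb τ f := by
      unfold ellDagger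
      linarith
    nlinarith
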